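/- arXiv:2602.11343 — 4 statements merged into one kernel-verified Lean document; each statement's English description precedes it below -/
import Mathlib

section
/- Let α be a q-Weil number of weight n, let d be the degree of the minimal polynomial of α over ℚ, and let c₀ be its constant coefficient. Then |c₀| = q^(n·d/2) (i.e. |c₀| = (Real.sqrt q)^(n·d)), and consequently the integer f·n·d is even, so that q^(n·d/2) is an integer power of p. -/
/-- `α : ℂ` is a `q`-Weil number of weight `n` (where `q = p ^ f`):
(1) `α` is algebraic over `ℚ`;
(2) every complex root of the minimal polynomial of `α` over `ℚ` has absolute value
    `q ^ (n/2) = (Real.sqrt q) ^ n`;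
(3) `p ^ m * α` is an algebraic integer for some `m ≥ 0`. -/
def IsWeilNumber (p f : ℕ) (n : ℤ) (α : ℂ) : Prop :=
  IsAlgebraic ℚ α ∧
  (∀ β : ℂ, Polynomial.aeval β (minpoly ℚ α) = 0 →
    ‖β‖ = Real.sqrt ((p : ℝ) ^ f) ^ n) ∧
  ∃ m : ℕ, IsIntegral ℤ ((p : ℂ) ^ m * α)

/-- If `α` is a `q`-Weil number of weight `n`, `d` the degree of its minimal polynomial over `ℚ`
and `c₀` its constant coefficient, then `|c₀| = q ^ (n * d / 2) = (Real.sqrt q) ^ (n * d)`;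
consequently `f * n * d` is even, and `q ^ (n * d / 2)` is an integer power of `p`. -/
theorem weilNumber_constantCoeff (p f : ℕ) (hp : p.Prime) (hf : 1 ≤ f) (n : ℤ) (α : ℂ)
    (h : IsWeilNumber p f n α) :
    |(((minpoly ℚ α).coeff 0 : ℚ) : ℝ)| =
        Real.sqrt ((p : ℝ) ^ f) ^ (n * ((minpoly ℚ α).natDegree : ℤ)) ∧
      Even ((f : ℤ) * n * ((minpoly ℚ α).natDegree : ℤ)) ∧
      ∃ k : ℤ, Real.sqrt ((p : ℝ) ^ f) ^ (n * ((minpoly ℚ α).natDegree : ℤ)) = (p : ℝ) ^ k := by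
  obtain ⟨halg, hroots, -⟩ := h
  have hint : IsIntegral ℚ α := halg.isIntegral
  have hp0 : (0:ℝ) < p := by exact_mod_cast hp.pos
  have hq0 : (0:ℝ) < (p:ℝ)^f := pow_pos hp0 f
  have hs0 : (0:ℝ) < Real.sqrt ((p:ℝ)^f) := Real.sqrt_pos.mpr hq0
  have hsp0 : (0:ℝ) < Real.sqrt p := Real.sqrt_pos.mpr hp0
  have hsq : (Real.sqrt p : ℝ) ^ (2:ℤ) = (p:ℝ) := by
    rw [zpow_two]; exact Real.mul_self_sqrt hp0.le
  set μ := minpoly ℚ α with hμdef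
  have hmonic : μ.Monic := minpoly.monic hint
  set d := μ.natDegree with hd
  set μC := μ.map (algebraMap ℚ ℂ) with hμCdef
  have hμCmonic : μC.Monic := hmonic.map _
  have hμCne : μC ≠ 0 := hμCmonic.ne_zero
  have hsplits : μC.Splits :=
    IsAlgClosed.splits μC
  have hcard : μC.roots.card = d := by
    rw [Polynomial.splits_iff_card_roots.mp hsplits, hμCdef, Polynomial.natDegree_map]
  have hprod : μC.coeff 0 = (-1)^d * μC.roots.prod := by
    have := hsplits.coeff_zero_eq_prod_roots_of_monic hμCmonic
    rwa [hμCdef, Polynomial.natDegree_map, ← hd, ← hμCdef] at this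
  have habsroot : ∀ β ∈ μC.roots, ‖β‖ = Real.sqrt ((p:ℝ)^f) ^ n := by
    intro β hβ
    apply hroots
    have := Polynomial.isRoot_of_mem_roots hβ
    rwa [Polynomial.IsRoot, hμCdef, Polynomial.eval_map, ← Polynomial.aeval_def] at this
  have key : ‖μC.coeff 0‖ = Real.sqrt ((p:ℝ)^f) ^ (n * (d:ℤ)) := by
    rw [hprod, norm_mul, norm_pow, norm_neg, norm_one, one_pow, one_mul]
    rw [show ‖μC.roots.prod‖ = (Multiset.map (‖·‖) μC.roots).prod from
      map_multiset_prod (normHom (α := ℂ)) _]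
    have hrep : Multiset.map (‖·‖) μC.roots =
        Multiset.replicate d (Real.sqrt ((p:ℝ)^f) ^ n) := by
      apply Multiset.eq_replicate.mpr
      refine ⟨by rw [Multiset.card_map, hcard], ?_⟩
      intro x hx
      obtain ⟨β, hβ, rfl⟩ := Multiset.mem_map.mp hx
      exact habsroot β hβ
    rw [hrep, Multiset.prod_replicate, ← zpow_natCast _ d, ← zpow_mul]
  have hco : |((μ.coeff 0 : ℚ) : ℝ)| = Real.sqrt ((p:ℝ)^f) ^ (n * (d:ℤ)) := by
    have hcc : μC.coeff 0 = ((((μ.coeff 0 : ℚ) : ℝ) : ℂ)) := by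
      rw [hμCdef, Polynomial.coeff_map]; push_cast; rfl
    rw [← Real.norm_eq_abs, ← Complex.norm_real, ← hcc, key]
  have hqsp : Real.sqrt ((p:ℝ)^f) = Real.sqrt p ^ f := by
    rw [show ((p:ℝ)^f) = (Real.sqrt p ^ f)^2 by
      rw [← pow_mul, mul_comm f 2, pow_mul, Real.sq_sqrt hp0.le]]
    exact Real.sqrt_sq (pow_nonneg hsp0.le f)
  have hpow : Real.sqrt ((p:ℝ)^f) ^ (n * (d:ℤ)) = Real.sqrt p ^ ((f:ℤ) * n * (d:ℤ)) := by
    rw [hqsp, ← zpow_natCast (Real.sqrt p) f, ← zpow_mul, mul_assoc]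
  have heven : Even ((f:ℤ) * n * (d:ℤ)) := by
    by_contra hodd
    rw [Int.not_even_iff_odd] at hodd
    obtain ⟨k, hk⟩ := hodd
    have hpk : ((p:ℝ)^k) ≠ 0 := zpow_ne_zero k (ne_of_gt hp0)
    have h1 : |((μ.coeff 0 : ℚ) : ℝ)| = (p:ℝ) ^ k * Real.sqrt p := by
      rw [hco, hpow, hk, zpow_add₀ (ne_of_gt hsp0), zpow_one, zpow_mul, hsq]
    have hrat : Real.sqrt p = ((|μ.coeff 0| * ((p:ℚ)^k)⁻¹ : ℚ) : ℝ) := by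
      push_cast
      rw [h1, mul_comm ((p:ℝ)^k), mul_assoc, mul_inv_cancel₀ hpk, mul_one]
    exact hp.irrational_sqrt ⟨_, hrat.symm⟩
  refine ⟨hco, heven, ?_⟩
  obtain ⟨k, hk⟩ := heven
  exact ⟨k, by rw [hpow, hk, ← two_mul, zpow_mul, hsq]⟩
end

section
/- Let M' and M be finitely generated free abelian groups, f : M' → M a surjective group homomorphism, φ' : M' → M' a group automorphism of finite order (φ'^k = id for some k ≥ 1), and φ : M → M a group homomorphism satisfying f ∘ φ' = φ ∘ f. Then the cokernel of the induced map on fixed points, Fix(φ') → Fix(φ) (where Fix(φ') = {x ∈ M' : φ'(x) = x} and Fix(φ) = {y ∈ M : φ(y) = y}, and the map is the restriction of f), is a finite abelian group; that is, the quotient Fix(φ) / f(Fix(φ')) is finite. -/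
/-- The fixed-point subgroup `{a : A | ψ a = a}` of an endomorphism `ψ` of an abelian
group `A`. -/
def fixedSubgroup {A : Type*} [AddCommGroup A] (ψ : A →+ A) : AddSubgroup A where
  carrier := {a | ψ a = a}
  zero_mem' := by simp
  add_mem' := by
    intro a b ha hb
    simp only [Set.mem_setOf_eq, map_add] at *
    rw [ha, hb]
  neg_mem' := by
    intro a ha
    simp only [Set.mem_setOf_eq, map_neg] at *
    rw [ha]

/-- Let `M'`, `M` be finitely generated free abelian groups, `f : M' → M` a surjective
homomorphism, `φ'` an automorphism of `M'` of finite order and `φ : M → M` a homomorphism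
with `f ∘ φ' = φ ∘ f`.  Then the cokernel of the induced map on fixed points
`Fix(φ') → Fix(φ)` is finite, i.e. `Fix(φ) / f(Fix(φ'))` is a finite group. -/
theorem coker_fixedPoints_finite {M' M : Type*} [AddCommGroup M'] [AddCommGroup M]
    [Module.Free ℤ M'] [Module.Finite ℤ M'] [Module.Free ℤ M] [Module.Finite ℤ M]
    (f : M' →+ M) (hf : Function.Surjective f)
    (φ' : M' →+ M') (hbij : Function.Bijective φ')
    (k : ℕ) (hk : 1 ≤ k) (hord : ∀ x : M', (⇑φ')^[k] x = x)
    (φ : M →+ M) (hcomm : ∀ x : M', f (φ' x) = φ (f x)) :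
    Finite
      (fixedSubgroup φ ⧸ ((fixedSubgroup φ').map f).addSubgroupOf (fixedSubgroup φ)) := by
  -- the fixed subgroup of φ is finitely generated
  have hfg : AddGroup.FG (fixedSubgroup φ) := by
    have : IsNoetherian ℤ M := inferInstance
    have h1 : (AddSubgroup.toIntSubmodule (fixedSubgroup φ)).FG :=
      IsNoetherian.noetherian _
    rw [Submodule.fg_iff_addSubgroup_fg] at h1
    exact (AddGroup.fg_iff_addSubgroup_fg _).mpr h1
  -- every element is killed by k
  have hkill : ∀ y : fixedSubgroup φ,
      k • y ∈ ((fixedSubgroup φ').map f).addSubgroupOf (fixedSubgroup φ) := by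
    rintro ⟨y, hy⟩
    obtain ⟨x, hx⟩ := hf y
    have hφy : ∀ i : ℕ, (⇑φ)^[i] y = y := by
      intro i
      induction i with
      | zero => rfl
      | succ n ih => rw [Function.iterate_succ_apply', ih]; exact hy
    have hfi : ∀ i : ℕ, f ((⇑φ')^[i] x) = (⇑φ)^[i] (f x) := by
      intro i
      induction i with
      | zero => rfl
      | succ n ih => rw [Function.iterate_succ_apply', Function.iterate_succ_apply',
          hcomm, ih]
    set N : M' := ∑ i ∈ Finset.range k, (⇑φ')^[i] x with hN
    have hNfix : φ' N = N := by
      rw [hN, map_sum]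
      have : ∀ i ∈ Finset.range k, φ' ((⇑φ')^[i] x) = (⇑φ')^[i + 1] x := by
        intro i _
        rw [Function.iterate_succ_apply']
      rw [Finset.sum_congr rfl this]
      obtain ⟨m, rfl⟩ : ∃ m, k = m + 1 := ⟨k - 1, (Nat.succ_pred_eq_of_pos hk).symm⟩
      rw [Finset.sum_range_succ, hord x, Finset.sum_range_succ']
      rfl
    have hfN : f N = k • y := by
      rw [hN, map_sum]
      have : ∀ i ∈ Finset.range k, f ((⇑φ')^[i] x) = y := by
        intro i _
        rw [hfi, hx, hφy]
      rw [Finset.sum_congr rfl this, Finset.sum_const, Finset.card_range]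
    refine ⟨N, hNfix, ?_⟩
    simp [hfN]
  -- hence the quotient is torsion and fg, so finite
  have : AddMonoid.IsTorsion
      (fixedSubgroup φ ⧸ ((fixedSubgroup φ').map f).addSubgroupOf (fixedSubgroup φ)) := by
    intro q
    refine isOfFinAddOrder_iff_nsmul_eq_zero.mpr ⟨k, hk, ?_⟩
    induction q using QuotientAddGroup.induction_on with
    | _ y =>
      rw [← QuotientAddGroup.mk_nsmul, QuotientAddGroup.eq_zero_iff]
      exact hkill y
  exact AddCommGroup.finite_of_fg_torsion _ this
end

section
/- Let M' and M be finitely generated free abelian groups, f : M' → M a surjective group homomorphism, φ' : M' → M' a group automorphism of finite order (φ'^k = id for some k ≥ 1), and φ : M → M a group homomorphism satisfying f ∘ φ' = φ ∘ f. Let k be a field. Then the monoid algebra k[Fix(φ)] (the AddMonoidAlgebra of the fixed-point subgroup Fix(φ) ⊆ M over k) is a finitely generated module over the image of the k-algebra homomorphism k[Fix(φ')] → k[Fix(φ)] induced by the restriction of f to fixed points. -/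
private lemma finite_of_fg_of_exponent (n : ℕ) [NeZero n] (G : Type*) [AddCommGroup G]
    [AddGroup.FG G] (h : ∀ x : G, n • x = 0) : Finite G := by
  obtain ⟨m, rfl⟩ := Nat.exists_eq_succ_of_ne_zero (NeZero.ne n)
  letI : Module (ZMod (m + 1)) G := AddCommGroup.zmodModule h
  haveI : Module.Finite ℤ G := Module.Finite.iff_addGroup_fg.mpr ‹_›
  haveI : IsScalarTower ℤ (ZMod (m + 1)) G := AddCommGroup.intIsScalarTower
  haveI : Module.Finite (ZMod (m + 1)) G :=
    Module.Finite.of_restrictScalars_finite ℤ (ZMod (m + 1)) G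
  exact @Module.finite_of_finite (ZMod (m + 1)) G _ _ ‹_› (Finite.of_fintype _) ‹_›


/-- Let `M'`, `M` be finitely generated free abelian groups, `f : M' → M` a surjective
homomorphism, `φ'` an automorphism of `M'` of finite order, and `φ : M → M` a homomorphism
with `f ∘ φ' = φ ∘ f`.  Let `k` be a field, and let `r : Fix(φ') → Fix(φ)` be the
restriction of `f` to fixed points.  Then the group algebra `k[Fix(φ)]` is a finitely
generated module over the image of the induced `k`-algebra map
`k[Fix(φ')] → k[Fix(φ)]`. -/
theorem groupAlgebra_fixedPoints_finite {M' M : Type*} [AddCommGroup M'] [AddCommGroup M]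
    [Module.Free ℤ M'] [Module.Finite ℤ M'] [Module.Free ℤ M] [Module.Finite ℤ M]
    (f : M' →+ M) (hf : Function.Surjective f)
    (φ' : M' →+ M') (hbij : Function.Bijective φ')
    (n : ℕ) (hn : 1 ≤ n) (hord : ∀ x : M', (⇑φ')^[n] x = x)
    (φ : M →+ M) (hcomm : ∀ x : M', f (φ' x) = φ (f x))
    (k : Type*) [Field k]
    (r : fixedSubgroup φ' →+ fixedSubgroup φ) (hr : ∀ x : fixedSubgroup φ', (r x : M) = f x) :
    Module.Finite
      (AddMonoidAlgebra.mapDomainAlgHom k k r).range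
      (AddMonoidAlgebra k (fixedSubgroup φ)) := by
  classical
  haveI : NeZero n := ⟨by omega⟩
  set H : AddSubgroup (fixedSubgroup φ) := r.range with hH
  -- key: n • a ∈ H for all a
  have key : ∀ a : fixedSubgroup φ, n • a ∈ H := by
    intro a
    obtain ⟨m', hm'⟩ := hf a.val
    set s : M' := ∑ i ∈ Finset.range n, (⇑φ')^[i] m' with hs
    have hfix : φ' s = s := by
      rw [hs, map_sum]
      have h1 : ∀ i, φ' ((⇑φ')^[i] m') = (⇑φ')^[i + 1] m' := by
        intro i
        rw [Function.iterate_succ_apply']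
      simp only [h1]
      have h2 : ∑ i ∈ Finset.range n, (⇑φ')^[i + 1] m'
          = ∑ i ∈ Finset.range n, (⇑φ')^[i] m' := by
        have := Finset.sum_range_succ' (fun i => (⇑φ')^[i] m') n
        rw [Finset.sum_range_succ] at this
        simp only [Function.iterate_zero_apply] at this
        rw [hord m'] at this
        -- this : (∑ i in range n, φ'^[i] m') + m' = (∑ i in range n, φ'^[i+1] m') + m'
        exact (add_right_cancel this).symm
      exact h2
    have hfs : f s = n • a.val := by
      have h3 : ∀ i, f ((⇑φ')^[i] m') = a.val := by
        intro i
        induction i with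
        | zero => simpa using hm'
        | succ j ih =>
          rw [Function.iterate_succ_apply', hcomm, ih]
          exact a.property
      rw [hs, map_sum]
      simp only [h3]
      simp
    have hsmem : s ∈ fixedSubgroup φ' := hfix
    refine ⟨⟨s, hsmem⟩, ?_⟩
    apply Subtype.ext
    rw [hr]
    simpa using hfs
  -- Q is finite
  letI Q := fixedSubgroup φ ⧸ H
  have htor : ∀ q : Q, n • q = 0 := by
    intro q
    induction q using QuotientAddGroup.induction_on with
    | H a =>
      rw [← QuotientAddGroup.mk_nsmul, QuotientAddGroup.eq_zero_iff]
      exact key a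
  haveI : AddGroup.FG (fixedSubgroup φ) := by
    rw [AddGroup.fg_iff_addSubgroup_fg]
    have hnoeth := IsNoetherian.noetherian ((fixedSubgroup φ).toIntSubmodule)
    rwa [Submodule.fg_iff_addSubgroup_fg, AddSubgroup.toIntSubmodule_toAddSubgroup] at hnoeth
  haveI : AddGroup.FG Q :=
    AddGroup.fg_of_surjective (f := QuotientAddGroup.mk' H) (QuotientAddGroup.mk'_surjective H)
  haveI : Finite Q := finite_of_fg_of_exponent n Q htor
  -- generators
  set A := (AddMonoidAlgebra.mapDomainAlgHom k k r).range with hA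
  set g : Q → AddMonoidAlgebra k (fixedSubgroup φ) :=
    fun q => AddMonoidAlgebra.single q.out 1 with hg
  have hspan : Submodule.span A (Set.range g) = ⊤ := by
    rw [eq_top_iff]
    rintro x -
    induction x using AddMonoidAlgebra.induction with
    | zero => exact Submodule.zero_mem _
    | single_add a b x _ _ ih =>
      refine Submodule.add_mem _ ?_ ih
      set q : Q := QuotientAddGroup.mk a with hq
      have hout : (QuotientAddGroup.mk q.out : Q) = QuotientAddGroup.mk a := q.out_eq
      have hmem : a - q.out ∈ H := by
        have := (QuotientAddGroup.eq (s := H)).mp hout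
        rwa [← sub_eq_neg_add] at this
      obtain ⟨x', hx'⟩ := hmem
      have hu : AddMonoidAlgebra.single (a - q.out) b ∈ A := by
        refine (AlgHom.mem_range _).mpr ⟨AddMonoidAlgebra.single x' b, ?_⟩
        rw [AddMonoidAlgebra.mapDomainAlgHom_apply]
        rw [AddMonoidAlgebra.mapDomain_single, hx']
      have heq : AddMonoidAlgebra.single a b
          = (⟨_, hu⟩ : A) • g q := by
        show AddMonoidAlgebra.single a b = AddMonoidAlgebra.single (a - q.out) b * g q
        rw [hg]
        rw [AddMonoidAlgebra.single_mul_single, mul_one, sub_add_cancel]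
      rw [heq]
      exact Submodule.smul_mem _ _ (Submodule.subset_span ⟨q, rfl⟩)
  refine ⟨⟨(Set.finite_range g).toFinset, ?_⟩⟩
  rw [Set.Finite.coe_toFinset]
  exact hspan
end

section
/- Let k be an infinite field, Λ a free abelian group of finite rank (written additively), and φ : Λ → Λ a group homomorphism. For every group homomorphism t : Λ → kˣ (from the additive group Λ to the multiplicative group of nonzero elements of k), let ρ_t denote the k-linear endomorphism of the group algebra k[Λ] (AddMonoidAlgebra k Λ) determined on basis elements by ρ_t(single λ c) = (t(λ) · t(φ(λ))⁻¹) • single λ c. Then an element x ∈ k[Λ] satisfies ρ_t(x) = x for all group homomorphisms t : Λ → kˣ if and only if x lies in the k-linear span of the basis elements single λ 1 with φ(λ) = λ. Equivalently, the subspace of elements invariant under all ρ_t equals the image of the group algebra k[Fix(φ)] of the fixed subgroup Fix(φ) = {λ ∈ Λ : φ(λ) = λ} inside k[Λ]. -/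
lemma exists_unit_zpow_ne_one {k : Type*} [Field k] [Infinite k] (n : ℤ) (hn : n ≠ 0) :
    ∃ u : kˣ, u ^ n ≠ 1 := by
  have hm : n.natAbs ≠ 0 := Int.natAbs_ne_zero.mpr hn
  have hfin : {a : k | a ^ n.natAbs = 1}.Finite := by
    have : {a : k | a ^ n.natAbs = 1} ⊆ (Polynomial.X ^ n.natAbs - 1 : Polynomial k).rootSet k := by
      intro a ha
      rw [Polynomial.mem_rootSet]
      constructor
      · intro h
        have := congrArg (Polynomial.eval (0:k)) h
        simp [zero_pow hm] at this
      · simp [Polynomial.aeval_def, ha.out, sub_eq_zero]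
    exact (Polynomial.rootSet_finite _ _).subset this
  obtain ⟨a, ha⟩ := (hfin.union (Set.finite_singleton 0)).infinite_compl.nonempty
  simp only [Set.mem_compl_iff, Set.mem_union, Set.mem_setOf_eq, Set.mem_singleton_iff,
    not_or] at ha
  refine ⟨Units.mk0 a ha.2, ?_⟩
  intro h
  apply ha.1
  have h2 : (Units.mk0 a ha.2) ^ n.natAbs = 1 := by
    rcases Int.natAbs_eq n with he | he
    · rw [← zpow_natCast, ← he]; exact h
    · rw [← zpow_natCast]
      have : (Units.mk0 a ha.2) ^ (-(n.natAbs:ℤ)) = 1 := by rw [← he]; exact h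
      rwa [zpow_neg, inv_eq_one] at this
  have := congrArg (Units.val) h2
  simpa using this

lemma exists_char_ne_one {k Λ : Type*} [Field k] [Infinite k] [AddCommGroup Λ]
    [Module.Free ℤ Λ] (μ : Λ) (hμ : μ ≠ 0) :
    ∃ t : Λ →+ Additive kˣ, Additive.toMul (t μ) ≠ 1 := by
  classical
  let b := Module.Free.chooseBasis ℤ Λ
  have hrepr : b.repr μ ≠ 0 := fun h => hμ (by simpa using congrArg b.repr.symm h)
  obtain ⟨i, hi⟩ : ∃ i, b.repr μ i ≠ 0 := by
    by_contra h
    push_neg at h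
    exact hrepr (Finsupp.ext h)
  obtain ⟨u, hu⟩ := exists_unit_zpow_ne_one (k := k) (b.repr μ i) hi
  refine ⟨(zmultiplesHom (Additive kˣ) (Additive.ofMul u)).comp
    ((b.coord i).toAddMonoidHom), ?_⟩
  simpa [zmultiplesHom, Module.Basis.coord, toMul_zsmul] using hu

/-- Twisted-conjugation invariants in the group algebra of a torus: let `k` be an infinite
field, `Λ` a finitely generated free abelian group and `φ : Λ → Λ` a homomorphism.  For
each group homomorphism `t : Λ → kˣ` let `ρ t` be the `k`-linear endomorphism of the group
algebra `k[Λ]` determined on basis elements by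
`ρ t (single l c) = (t l * (t (φ l))⁻¹) • single l c`.  Then `x ∈ k[Λ]` is invariant under
all `ρ t` iff `x` lies in the `k`-span of the basis elements `single l 1` with `φ l = l`
(i.e. the image of the group algebra of `Fix(φ)`). -/
theorem twistedInvariants_eq_span_fixed {k Λ : Type*} [Field k] [Infinite k]
    [AddCommGroup Λ] [Module.Free ℤ Λ] [Module.Finite ℤ Λ] (φ : Λ →+ Λ)
    (ρ : (Λ →+ Additive kˣ) → (AddMonoidAlgebra k Λ →ₗ[k] AddMonoidAlgebra k Λ))
    (hρ : ∀ (t : Λ →+ Additive kˣ) (l : Λ) (c : k),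
      ρ t (AddMonoidAlgebra.single l c) =
        (((Additive.toMul (t l) * (Additive.toMul (t (φ l)))⁻¹ : kˣ) : k)) •
          AddMonoidAlgebra.single l c)
    (x : AddMonoidAlgebra k Λ) :
    (∀ t : Λ →+ Additive kˣ, ρ t x = x) ↔
      x ∈ Submodule.span k
        {y : AddMonoidAlgebra k Λ | ∃ l : Λ, φ l = l ∧ y = AddMonoidAlgebra.single l (1 : k)} := by
  classical
  -- the scalar
  set c : (Λ →+ Additive kˣ) → Λ → k :=
    fun t l => ((Additive.toMul (t l) * (Additive.toMul (t (φ l)))⁻¹ : kˣ) : k) with hc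
  -- coefficient formula
  have key : ∀ (t : Λ →+ Additive kˣ) (y : AddMonoidAlgebra k Λ) (l : Λ),
      (ρ t y).coeff l = c t l * y.coeff l := by
    intro t y
    induction y using AddMonoidAlgebra.induction_linear with
    | zero => intro l; simp
    | add f g hf hg =>
      intro l
      rw [map_add, AddMonoidAlgebra.coeff_add, Finsupp.add_apply, hf l, hg l,
        AddMonoidAlgebra.coeff_add, Finsupp.add_apply, mul_add]
    | single a cc =>
      intro l
      rw [hρ]
      simp only [AddMonoidAlgebra.coeff_smul, AddMonoidAlgebra.coeff_single,
        Finsupp.smul_single, Finsupp.smul_apply]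
      by_cases h : a = l
      · subst h
        simp only [Finsupp.single_apply, if_pos rfl, smul_eq_mul, hc]
        push_cast
        ring
      · simp [Finsupp.single_apply, h]
  -- the span equals the supported submodule
  have hset : {y : AddMonoidAlgebra k Λ | ∃ l : Λ, φ l = l ∧ y = AddMonoidAlgebra.single l (1 : k)}
      = (fun l => AddMonoidAlgebra.single l (1 : k)) '' {l : Λ | φ l = l} := by
    ext y
    constructor
    · rintro ⟨l, hl, rfl⟩; exact ⟨l, hl, rfl⟩
    · rintro ⟨l, hl, rfl⟩; exact ⟨l, hl, rfl⟩
  have hspan : Submodule.span k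
      {y : AddMonoidAlgebra k Λ | ∃ l : Λ, φ l = l ∧ y = AddMonoidAlgebra.single l (1 : k)}
      = (Finsupp.supported k k {l : Λ | φ l = l}).map
          ((AddMonoidAlgebra.coeffLinearEquiv k (S := k) (M := Λ)).symm : (Λ →₀ k) →ₗ[k] _) := by
    rw [hset, Finsupp.supported_eq_span_single, Submodule.map_span, ← Set.image_comp]
    rfl
  rw [hspan, Submodule.mem_map_equiv, LinearEquiv.symm_symm,
    AddMonoidAlgebra.coeffLinearEquiv_apply, Finsupp.mem_supported]
  constructor
  · intro h l hl
    by_contra hfix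
    have hμ : l - φ l ≠ 0 := sub_ne_zero.mpr fun he => hfix he.symm
    obtain ⟨t, ht⟩ := exists_char_ne_one (k := k) _ hμ
    have hxl : x.coeff l ≠ 0 := Finsupp.mem_support_iff.mp hl
    have h1 : c t l * x.coeff l = x.coeff l := by rw [← key t x l, h t]
    have h2 : c t l = 1 := by
      have h3 : (c t l - 1) * x.coeff l = 0 := by rw [sub_mul, h1, one_mul, sub_self]
      rcases mul_eq_zero.mp h3 with h3 | h3
      · exact sub_eq_zero.mp h3
      · exact absurd h3 hxl
    apply ht
    have : ((Additive.toMul (t l) * (Additive.toMul (t (φ l)))⁻¹ : kˣ) : k) = ((1 : kˣ) : k) := by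
      simpa [hc] using h2
    have hu : (Additive.toMul (t l) * (Additive.toMul (t (φ l)))⁻¹ : kˣ) = 1 := Units.ext this
    rw [map_sub, toMul_sub]
    simpa [div_eq_mul_inv] using hu
  · intro h t
    ext l
    rw [key t x l]
    by_cases hxl : x.coeff l = 0
    · simp [hxl]
    · have : φ l = l := h (Finsupp.mem_support_iff.mpr hxl)
      simp [hc, this]
end
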